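/- arXiv:2204.01685 — 5 statements merged into one kernel-verified Lean document; each statement's English description precedes it below -/
import Mathlib

section
/- If X is a positive semidefinite matrix on the tensor product of two finite-dimensional Hilbert spaces A ⊗ B and X has positive partial transpose (i.e., (id ⊗ transpose)(X) is positive semidefinite), then rank(X) ≥ rank(Tr_A X) and rank(X) ≥ rank(Tr_B X). -/
open Matrix Kronecker BigOperators ComplexOrder

noncomputable section

/-- Partial trace over the first tensor factor. -/
def trFst {m p : Type*} [Fintype m] (X : Matrix (m × p) (m × p) ℂ) : Matrix p p ℂ :=
  fun i j => ∑ a, X (a, i) (a, j)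

/-- Partial trace over the second tensor factor. -/
def trSnd {m p : Type*} [Fintype p] (X : Matrix (m × p) (m × p) ℂ) : Matrix m m ℂ :=
  fun i j => ∑ b, X (i, b) (j, b)

/-- Partial transpose on the second tensor factor. -/
def ptSnd {m p : Type*} (X : Matrix (m × p) (m × p) ℂ) : Matrix (m × p) (m × p) ℂ :=
  fun q r => X (q.1, r.2) (r.1, q.2)

/-- A bipartite matrix is separable if it is a finite sum of Kronecker products of
positive semidefinite matrices (equivalently, lies in the convex hull of such products). -/
def Separable {m p : Type*} [Fintype m] [Fintype p] (X : Matrix (m × p) (m × p) ℂ) : Prop :=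
  ∃ (k : ℕ) (Y : Fin k → Matrix m m ℂ) (Z : Fin k → Matrix p p ℂ),
    (∀ i, (Y i).PosSemidef) ∧ (∀ i, (Z i).PosSemidef) ∧ X = ∑ i, (Y i) ⊗ₖ (Z i)

/-- The amplification `id_m ⊗ Φ` of a map `Φ`, acting blockwise. -/
def amp {dA dB : ℕ} {m : Type*}
    (Φ : Matrix (Fin dA) (Fin dA) ℂ →ₗ[ℂ] Matrix (Fin dB) (Fin dB) ℂ)
    (X : Matrix (m × Fin dA) (m × Fin dA) ℂ) : Matrix (m × Fin dB) (m × Fin dB) ℂ :=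
  fun q r => Φ (fun a a' => X (q.1, a) (r.1, a')) q.2 r.2

/-- The amplification `ϑ_m ⊗ Φ` of a map `Φ` (transpose on the first factor). -/
def ampT {dA dB : ℕ} {m : Type*}
    (Φ : Matrix (Fin dA) (Fin dA) ℂ →ₗ[ℂ] Matrix (Fin dB) (Fin dB) ℂ)
    (X : Matrix (m × Fin dA) (m × Fin dA) ℂ) : Matrix (m × Fin dB) (m × Fin dB) ℂ :=
  fun q r => Φ (fun a a' => X (r.1, a) (q.1, a')) q.2 r.2

/-- Complete positivity. -/
def IsCP {dA dB : ℕ} (Φ : Matrix (Fin dA) (Fin dA) ℂ →ₗ[ℂ] Matrix (Fin dB) (Fin dB) ℂ) : Prop :=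
  ∀ (n : ℕ) (X : Matrix (Fin n × Fin dA) (Fin n × Fin dA) ℂ),
    X.PosSemidef → (amp Φ X).PosSemidef

/-- Complete copositivity. -/
def IsCoCP {dA dB : ℕ} (Φ : Matrix (Fin dA) (Fin dA) ℂ →ₗ[ℂ] Matrix (Fin dB) (Fin dB) ℂ) : Prop :=
  ∀ (n : ℕ) (X : Matrix (Fin n × Fin dA) (Fin n × Fin dA) ℂ),
    X.PosSemidef → (ampT Φ X).PosSemidef

/-- A map is PPT if it is completely positive and completely copositive. -/
def IsPPT {dA dB : ℕ} (Φ : Matrix (Fin dA) (Fin dA) ℂ →ₗ[ℂ] Matrix (Fin dB) (Fin dB) ℂ) : Prop :=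
  IsCP Φ ∧ IsCoCP Φ

/-- Entanglement breaking maps. -/
def IsEB {dA dB : ℕ} (Φ : Matrix (Fin dA) (Fin dA) ℂ →ₗ[ℂ] Matrix (Fin dB) (Fin dB) ℂ) : Prop :=
  ∀ (n : ℕ) (X : Matrix (Fin n × Fin dA) (Fin n × Fin dA) ℂ),
    X.PosSemidef → Separable (amp Φ X)

/-- The Choi matrix of a linear map. -/
def Choi {dA dB : ℕ} (Φ : Matrix (Fin dA) (Fin dA) ℂ →ₗ[ℂ] Matrix (Fin dB) (Fin dB) ℂ) :
    Matrix (Fin dA × Fin dB) (Fin dA × Fin dB) ℂ :=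
  ∑ i, ∑ j, (single i j (1 : ℂ)) ⊗ₖ Φ (single i j (1 : ℂ))


namespace PPTRankAux

open Module Submodule

variable {K : Type*} [Field K] {M N : Type*} [AddCommGroup M] [Module K M]
  [AddCommGroup N] [Module K N]

lemma finrank_comap_subtype [FiniteDimensional K M] (p q : Submodule K M) :
    finrank K ↥(Submodule.comap p.subtype q) = finrank K ↥(p ⊓ q) := by
  rw [← Submodule.map_comap_subtype p q]
  exact (Submodule.equivMapOfInjective p.subtype (Submodule.injective_subtype p)
    (Submodule.comap p.subtype q)).finrank_eq

lemma finrank_map_add_le [FiniteDimensional K M] (g : M →ₗ[K] N) {F W : Submodule K M}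
    (hFW : F ≤ W) :
    finrank K ↥(W.map g) + finrank K ↥F ≤ finrank K ↥W + finrank K ↥(F.map g) := by
  have key : ∀ p : Submodule K M,
      finrank K ↥(p.map g) + finrank K ↥(p ⊓ LinearMap.ker g) = finrank K ↥p := by
    intro p
    have h1 : p.map g = LinearMap.range (g ∘ₗ p.subtype) := by
      rw [LinearMap.range_comp, Submodule.range_subtype]
    have h2 := LinearMap.finrank_range_add_finrank_ker (g ∘ₗ p.subtype)
    rw [LinearMap.ker_comp, finrank_comap_subtype] at h2
    rw [h1]
    exact h2
  have hW := key W
  have hF := key F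
  have hm : finrank K ↥(F ⊓ LinearMap.ker g) ≤ finrank K ↥(W ⊓ LinearMap.ker g) :=
    Submodule.finrank_mono (inf_le_inf_right _ hFW)
  omega

lemma key_abstract [FiniteDimensional K M] [FiniteDimensional K N]
    {ι : Type*} [DecidableEq ι] (V : ι → Submodule K M) (π : ι → (M →ₗ[K] N))
    (hcond : ∀ x a, (V a).map (π x) ≤ (V a).map (π a)) (s : Finset ι) :
    finrank K ↥(s.sup fun a => (V a).map (π a)) ≤ finrank K ↥(s.sup V) := by
  classical
  induction s using Finset.induction_on with
  | empty => rw [Finset.sup_empty, finrank_bot]; exact Nat.zero_le _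
  | @insert j s hj IH =>
    set S := s.sup (fun a => (V a).map (π a)) with hS
    set F := s.sup V with hF
    have hmapF : F.map (π j) ≤ S := by
      rw [Submodule.map_le_iff_le_comap]
      refine Finset.sup_le fun a ha => ?_
      rw [← Submodule.map_le_iff_le_comap]
      exact le_trans (hcond j a)
        (Finset.le_sup (f := fun a => (V a).map (π a)) ha)
    rw [Finset.sup_insert, Finset.sup_insert, ← hS, ← hF]
    have hWrw : (V j ⊔ F).map (π j) ⊔ S = (V j).map (π j) ⊔ S := by
      rw [Submodule.map_sup, sup_assoc, sup_eq_right.mpr hmapF]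
    rw [← hWrw]
    have h1 := Submodule.finrank_sup_add_finrank_inf_eq ((V j ⊔ F).map (π j)) S
    have h2 : finrank K ↥(F.map (π j)) ≤ finrank K ↥((V j ⊔ F).map (π j) ⊓ S) :=
      Submodule.finrank_mono (le_inf (Submodule.map_mono le_sup_right) hmapF)
    have h3 := finrank_map_add_le (π j) (le_sup_right : F ≤ V j ⊔ F)
    omega

/-- Column space of a matrix. -/
def colSp {n o : Type*} [Fintype o] (A : Matrix n o ℂ) : Submodule ℂ (n → ℂ) :=
  LinearMap.range A.mulVecLin

lemma rank_eq_colSp {n o : Type*} [Fintype o] (A : Matrix n o ℂ) :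
    A.rank = finrank ℂ ↥(colSp A) := rfl

lemma colSp_CTmul_le {n o q : Type*} [Fintype n] [Fintype o] [Fintype q]
    (A : Matrix n o ℂ) (B : Matrix n q ℂ) :
    colSp (Aᴴ * B) ≤ colSp (Aᴴ * A) := by
  have h1 : colSp (Aᴴ * B) ≤ colSp Aᴴ := by
    rw [colSp, colSp, Matrix.mulVecLin_mul]
    exact LinearMap.range_comp_le_range _ _
  have h2 : colSp (Aᴴ * A) = colSp Aᴴ := by
    apply Submodule.eq_of_le_of_finrank_le
    · rw [colSp, colSp, Matrix.mulVecLin_mul]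
      exact LinearMap.range_comp_le_range _ _
    · rw [← rank_eq_colSp, ← rank_eq_colSp, Matrix.rank_conjTranspose_mul_self,
        Matrix.rank_conjTranspose]
  rw [h2]
  exact h1

/-- The `(x,a)` block of a bipartite matrix. -/
def Blk {m p : Type*} (X : Matrix (m × p) (m × p) ℂ) (x a : m) : Matrix p p ℂ :=
  X.submatrix (Prod.mk x) (Prod.mk a)

lemma colSp_blk_le {m p : Type*} [Fintype m] [Fintype p]
    {X : Matrix (m × p) (m × p) ℂ} (hX : X.PosSemidef) (x a : m) :
    colSp (Blk X x a) ≤ colSp (Blk X x x) := by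
  obtain ⟨B, rfl⟩ : ∃ B : Matrix (m × p) (m × p) ℂ, X = Bᴴ * B := by
    classical
    open scoped MatrixOrder in
    exact CStarAlgebra.nonneg_iff_eq_star_mul_self.mp hX.nonneg
  have hblk : ∀ y z : m, Blk (Bᴴ * B) y z
      = (B.submatrix id (Prod.mk y))ᴴ * (B.submatrix id (Prod.mk z)) := by
    intro y z
    ext b b'
    simp [Blk, Matrix.mul_apply, Matrix.conjTranspose_apply, Matrix.submatrix_apply]
  rw [hblk x a, hblk x x]
  exact colSp_CTmul_le _ _

lemma mulVec_map_star {n o : Type*} [Fintype o] (A : Matrix n o ℂ) (w : o → ℂ) :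
    (A.map star) *ᵥ (fun j => star (w j)) = fun i => star ((A *ᵥ w) i) := by
  funext i
  simp only [Matrix.mulVec, dotProduct, Matrix.map_apply]
  rw [star_sum]
  exact Finset.sum_congr rfl fun j _ => (star_mul' _ _).symm

lemma colSp_le_of_map_star {n o q : Type*} [Fintype o] [Fintype q]
    {A : Matrix n o ℂ} {D : Matrix n q ℂ}
    (h : colSp (A.map star) ≤ colSp (D.map star)) : colSp A ≤ colSp D := by
  rintro v ⟨w, rfl⟩
  have h1 : (fun i => star ((A *ᵥ w) i)) ∈ colSp (A.map star) :=
    ⟨fun j => star (w j), mulVec_map_star A w⟩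
  obtain ⟨u, hu⟩ := h h1
  refine ⟨fun j => star (u j), ?_⟩
  have h2 := mulVec_map_star (D.map star) u
  have h3 : (D.map star).map star = D := by
    ext i j
    simp
  rw [h3] at h2
  simp only [Matrix.mulVecLin_apply] at hu ⊢
  funext i
  rw [congrFun h2 i, congrFun hu i, star_star]

lemma dagger {m p : Type*} [Fintype m] [Fintype p]
    {X : Matrix (m × p) (m × p) ℂ} (hX : X.PosSemidef) (hPPT : (ptSnd X).PosSemidef)
    (x a : m) : colSp (Blk X x a) ≤ colSp (Blk X a a) := by
  have hsym : ∀ q r, X q r = star (X r q) := by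
    intro q r
    rw [← congrFun (congrFun hX.1 q) r, Matrix.conjTranspose_apply]
  have h0 := colSp_blk_le hPPT a x
  have e1 : Blk (ptSnd X) a x = (Blk X x a).map star := by
    ext b b'
    simp only [Blk, ptSnd, Matrix.submatrix_apply, Matrix.map_apply]
    exact hsym _ _
  have e2 : Blk (ptSnd X) a a = (Blk X a a).map star := by
    ext b b'
    simp only [Blk, ptSnd, Matrix.submatrix_apply, Matrix.map_apply]
    exact hsym _ _
  rw [e1, e2] at h0
  exact colSp_le_of_map_star h0

lemma map_funLeft_colSp {m p : Type*} [Fintype m] [Fintype p]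
    (X : Matrix (m × p) (m × p) ℂ) (x a : m) :
    (colSp (X.submatrix id (Prod.mk a))).map (LinearMap.funLeft ℂ ℂ (fun b : p => (x, b)))
      = colSp (Blk X x a) := by
  have hcomp : (LinearMap.funLeft ℂ ℂ (fun b : p => (x, b))).comp
      (X.submatrix id (Prod.mk a)).mulVecLin = (Blk X x a).mulVecLin := by
    apply LinearMap.ext
    intro w
    funext b
    simp [LinearMap.funLeft_apply, Matrix.mulVecLin_apply, Matrix.mulVec,
      dotProduct, Blk, Matrix.submatrix_apply]
  rw [colSp, colSp, ← hcomp, LinearMap.range_comp]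

lemma colGroup_le {m p : Type*} [Fintype m] [Fintype p] [DecidableEq m]
    (X : Matrix (m × p) (m × p) ℂ) (a : m) :
    colSp (X.submatrix id (Prod.mk a)) ≤ colSp X := by
  rintro v ⟨w, rfl⟩
  refine ⟨fun q => if q.1 = a then w q.2 else 0, ?_⟩
  simp only [Matrix.mulVecLin_apply]
  funext q
  simp only [Matrix.mulVec, dotProduct, Matrix.submatrix_apply, id_eq]
  rw [Fintype.sum_prod_type]
  simp [mul_ite, mul_zero, Finset.sum_ite_eq, Finset.sum_ite_eq']

lemma colSp_trFst_le {m p : Type*} [Fintype m] [Fintype p]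
    (X : Matrix (m × p) (m × p) ℂ) :
    colSp (trFst X) ≤ Finset.univ.sup (fun a : m => colSp (Blk X a a)) := by
  rintro v ⟨w, rfl⟩
  have hsum : trFst X *ᵥ w = ∑ a : m, (Blk X a a) *ᵥ w := by
    funext i
    simp only [trFst, Matrix.mulVec, dotProduct, Blk, Matrix.submatrix_apply,
      Finset.sum_apply, Finset.sum_mul]
    rw [Finset.sum_comm]
  simp only [Matrix.mulVecLin_apply]
  rw [hsum]
  apply Submodule.sum_mem
  intro a _
  have hmem : (Blk X a a) *ᵥ w ∈ colSp (Blk X a a) :=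
    LinearMap.mem_range.mpr ⟨w, Matrix.mulVecLin_apply _ _⟩
  exact SetLike.le_def.mp (Finset.le_sup (f := fun a : m => colSp (Blk X a a)) (Finset.mem_univ a)) hmem

theorem master {m p : Type*} [Fintype m] [Fintype p] [DecidableEq m]
    (X : Matrix (m × p) (m × p) ℂ) (hX : X.PosSemidef) (hPPT : (ptSnd X).PosSemidef) :
    (trFst X).rank ≤ X.rank := by
  classical
  set V : m → Submodule ℂ ((m × p) → ℂ) :=
    (fun a => colSp (X.submatrix id (Prod.mk a))) with hV
  set Pi : m → (((m × p) → ℂ) →ₗ[ℂ] (p → ℂ)) :=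
    (fun x => LinearMap.funLeft ℂ ℂ (fun b : p => (x, b))) with hPi
  have hmap : ∀ x a, (V a).map (Pi x) = colSp (Blk X x a) := fun x a =>
    map_funLeft_colSp X x a
  have hcond : ∀ x a, (V a).map (Pi x) ≤ (V a).map (Pi a) := by
    intro x a
    rw [hmap, hmap]
    exact dagger hX hPPT x a
  have hkey := key_abstract V Pi hcond Finset.univ
  have h1 : (trFst X).rank ≤ finrank ℂ ↥(Finset.univ.sup fun a : m => (V a).map (Pi a)) := by
    have hrw : (Finset.univ.sup fun a : m => (V a).map (Pi a))
        = Finset.univ.sup (fun a : m => colSp (Blk X a a)) :=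
      Finset.sup_congr rfl fun a _ => hmap a a
    rw [rank_eq_colSp, hrw]
    exact Submodule.finrank_mono (colSp_trFst_le X)
  have h2 : finrank ℂ ↥(Finset.univ.sup V) ≤ X.rank := by
    rw [rank_eq_colSp]
    exact Submodule.finrank_mono (Finset.sup_le fun a _ => colGroup_le X a)
  exact le_trans h1 (le_trans hkey h2)

end PPTRankAux


theorem stmt0 {dA dB : ℕ} (X : Matrix (Fin dA × Fin dB) (Fin dA × Fin dB) ℂ)
    (hX : X.PosSemidef) (hPPT : (ptSnd X).PosSemidef) :
    (trFst X).rank ≤ X.rank ∧ (trSnd X).rank ≤ X.rank := by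
  constructor
  · exact PPTRankAux.master X hX hPPT
  · set X' : Matrix (Fin dB × Fin dA) (Fin dB × Fin dA) ℂ :=
      X.submatrix Prod.swap Prod.swap with hX'def
    have hX' : X'.PosSemidef := hX.submatrix _
    have hPT' : ptSnd X' = ((ptSnd X)ᵀ).submatrix Prod.swap Prod.swap := by
      ext q r
      cases q with
      | mk b a =>
        cases r with
        | mk b' a' =>
          simp [hX'def, ptSnd, Matrix.submatrix_apply, Matrix.transpose_apply, Prod.swap]
    have hPPT' : (ptSnd X').PosSemidef := by
      rw [hPT']
      exact hPPT.transpose.submatrix _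
    have e : trFst X' = trSnd X := by
      ext i j
      simp [hX'def, trFst, trSnd, Matrix.submatrix_apply, Prod.swap]
    have hr := PPTRankAux.master X' hX' hPPT'
    rw [e] at hr
    have hrank : X'.rank = X.rank := by
      have h := Matrix.rank_submatrix X (Equiv.prodComm (Fin dB) (Fin dA))
        (Equiv.prodComm (Fin dB) (Fin dA))
      rw [hX'def]
      simpa [Equiv.coe_prodComm] using h
    rw [hrank] at hr
    exact hr
end
end

section
/- A linear map Φ : M_{d_A}(ℂ) → M_{d_B}(ℂ) is entanglement breaking if and only if its Choi matrix J(Φ) is separable. -/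
open Matrix Kronecker BigOperators ComplexOrder

noncomputable section

lemma psd_sum {n ι : Type*} [Fintype n] [Fintype ι] (f : ι → Matrix n n ℂ)
    (h : ∀ i, (f i).PosSemidef) : (∑ i, f i).PosSemidef := by
  classical
  exact Finset.sum_induction f _ (fun a b ha hb => ha.add hb) Matrix.PosSemidef.zero
    (fun i _ => h i)

lemma sum3_comm {α β γ M : Type*} [AddCommMonoid M] [Fintype α] [Fintype β] [Fintype γ]
    (f : α → β → γ → M) :
    ∑ a, ∑ b, ∑ c, f a b c = ∑ c, ∑ b, ∑ a, f a b c :=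
  calc ∑ a, ∑ b, ∑ c, f a b c
      = ∑ b, ∑ a, ∑ c, f a b c := Finset.sum_comm
    _ = ∑ b, ∑ c, ∑ a, f a b c := Finset.sum_congr rfl fun _ _ => Finset.sum_comm
    _ = ∑ c, ∑ b, ∑ a, f a b c := Finset.sum_comm

lemma sum3_comm' {α β γ M : Type*} [AddCommMonoid M] [Fintype α] [Fintype β] [Fintype γ]
    (f : α → β → γ → M) :
    ∑ a, ∑ b, ∑ c, f a b c = ∑ c, ∑ a, ∑ b, f a b c :=
  calc ∑ a, ∑ b, ∑ c, f a b c
      = ∑ a, ∑ c, ∑ b, f a b c := Finset.sum_congr rfl fun _ _ => Finset.sum_comm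
    _ = ∑ c, ∑ a, ∑ b, f a b c := Finset.sum_comm

lemma compress_psd {m p : Type*} [Fintype m] [Fintype p] [DecidableEq m]
    (X : Matrix (m × p) (m × p) ℂ) (hX : X.PosSemidef) (Y : Matrix p p ℂ) (hY : Y.PosSemidef) :
    Matrix.PosSemidef (Matrix.of fun q r => ∑ a, ∑ a', Y a a' * X (q, a) (r, a')) := by
  classical
  obtain ⟨B, hB⟩ : ∃ B : Matrix p p ℂ, Y = Bᴴ * B := by
    open scoped MatrixOrder Matrix.Norms.L2Operator in
    obtain ⟨B, hB⟩ := CStarAlgebra.nonneg_iff_eq_star_mul_self.mp hY.nonneg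
    exact ⟨B, hB⟩
  have key : (Matrix.of fun q r => ∑ a, ∑ a', Y a a' * X (q, a) (r, a'))
      = ∑ k : p, (Matrix.of fun q (sa : m × p) => if q = sa.1 then star (B k sa.2) else 0) * X *
        (Matrix.of fun q (sa : m × p) => if q = sa.1 then star (B k sa.2) else 0)ᴴ := by
    ext q r
    simp only [Matrix.sum_apply, Matrix.mul_apply, Matrix.conjTranspose_apply, Matrix.of_apply,
      Fintype.sum_prod_type, hB, apply_ite star, star_zero, star_star]
    simp only [ite_mul, zero_mul, mul_ite, mul_zero, Finset.sum_ite_irrel, Finset.sum_const_zero,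
      Finset.sum_ite_eq, Finset.mem_univ, if_true]
    simp only [Finset.sum_mul]
    rw [sum3_comm]
    refine Finset.sum_congr rfl fun k _ => Finset.sum_congr rfl fun a' _ =>
      Finset.sum_congr rfl fun a _ => by ring
  rw [key]
  exact psd_sum _ fun k => hX.mul_mul_conjTranspose_same _

lemma choi_apply {dA dB : ℕ} (Φ : Matrix (Fin dA) (Fin dA) ℂ →ₗ[ℂ] Matrix (Fin dB) (Fin dB) ℂ)
    (a a' : Fin dA) (b b' : Fin dB) :
    Choi Φ (a, b) (a', b') = Φ (single a a' 1) b b' := by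
  simp only [Choi, Matrix.sum_apply, Matrix.kroneckerMap_apply, Matrix.single,
    Matrix.of_apply, ite_and, ite_mul, one_mul, zero_mul, Finset.sum_ite_irrel,
    Finset.sum_const_zero, Finset.sum_ite_eq, Finset.sum_ite_eq', Finset.mem_univ, if_true]

lemma phi_apply {dA dB : ℕ} (Φ : Matrix (Fin dA) (Fin dA) ℂ →ₗ[ℂ] Matrix (Fin dB) (Fin dB) ℂ)
    (A : Matrix (Fin dA) (Fin dA) ℂ) (b b' : Fin dB) :
    Φ A b b' = ∑ a, ∑ a', A a a' * Φ (single a a' 1) b b' := by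
  conv_lhs => rw [matrix_eq_sum_single A]
  have : ∀ (i j : Fin dA), single i j (A i j) = A i j • single i j (1 : ℂ) := by
    intro i j
    rw [smul_single, smul_eq_mul, mul_one]
  simp_rw [this]
  simp only [map_sum, _root_.map_smul, Matrix.sum_apply, Matrix.smul_apply, smul_eq_mul]

theorem stmt2 {dA dB : ℕ} (Φ : Matrix (Fin dA) (Fin dA) ℂ →ₗ[ℂ] Matrix (Fin dB) (Fin dB) ℂ) :
    IsEB Φ ↔ Separable (Choi Φ) := by
  constructor
  · -- EB → Choi separable
    intro hEB
    set B : Matrix (Fin 1) (Fin dA × Fin dA) ℂ :=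
      Matrix.of fun _ p => if p.1 = p.2 then 1 else 0 with hBdef
    have hX : (Bᴴ * B).PosSemidef := Matrix.posSemidef_conjTranspose_mul_self B
    have h := hEB dA (Bᴴ * B) hX
    have hamp : amp Φ (Bᴴ * B) = Choi Φ := by
      ext ⟨a, b⟩ ⟨a', b'⟩
      rw [choi_apply]
      show Φ (fun x y => (Bᴴ * B) (a, x) (a', y)) b b' = _
      have harg : (fun x y => (Bᴴ * B) (a, x) (a', y)) = single a a' (1 : ℂ) := by
        funext x y
        simp [hBdef, Matrix.mul_apply, Matrix.conjTranspose_apply, Matrix.single,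
        Fin.sum_univ_one, apply_ite star, eq_comm, ite_and]
        split_ifs <;> rfl
      rw [harg]
    rwa [hamp] at h
  · -- Choi separable → EB
    rintro ⟨k, Y, Z, hY, hZ, hChoi⟩ n X hX
    refine ⟨k, fun i => Matrix.of fun q r => ∑ a, ∑ a', Y i a a' * X (q, a) (r, a'), Z,
      fun i => compress_psd X hX (Y i) (hY i), hZ, ?_⟩
    have hE : ∀ (a a' : Fin dA) (b b' : Fin dB),
        Φ (single a a' 1) b b' = ∑ i, Y i a a' * Z i b b' := by
      intro a a' b b'
      rw [← choi_apply, hChoi]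
      simp [Matrix.sum_apply, Matrix.kroneckerMap_apply]
    ext ⟨q1, q2⟩ ⟨r1, r2⟩
    show Φ (fun a a' => X (q1, a) (r1, a')) q2 r2 = _
    rw [phi_apply Φ (fun a a' => X (q1, a) (r1, a'))]
    simp only [hE, Matrix.sum_apply, Matrix.kroneckerMap_apply, Matrix.of_apply,
      Finset.mul_sum, Finset.sum_mul]
    rw [sum3_comm']
    refine Finset.sum_congr rfl fun i _ => Finset.sum_congr rfl fun a _ =>
      Finset.sum_congr rfl fun a' _ => by ring
end
end

section
/- If X ∈ M_{d_A} ⊗ M_{d_B} is separable, then X has positive partial transpose. -/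
open Matrix Kronecker BigOperators ComplexOrder

noncomputable section

lemma psd_add {n : Type*} [Fintype n] {A B : Matrix n n ℂ} (hA : A.PosSemidef)
    (hB : B.PosSemidef) : (A + B).PosSemidef := by
  refine ⟨hA.1.add hB.1, fun x => ?_⟩
  have := add_nonneg (hA.2 x) (hB.2 x)
  simpa [Matrix.add_mulVec, dotProduct_add, mul_add, add_mul] using this

lemma psd_kron {m p : Type*} [Fintype m] [Fintype p] [DecidableEq m] [DecidableEq p]
    {Y : Matrix m m ℂ} {Z : Matrix p p ℂ} (hY : Y.PosSemidef) (hZ : Z.PosSemidef) :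
    (Y ⊗ₖ Z).PosSemidef := by
  exact hY.kronecker hZ

theorem stmt13 {dA dB : ℕ} (X : Matrix (Fin dA × Fin dB) (Fin dA × Fin dB) ℂ)
    (hX : Separable X) : (ptSnd X).PosSemidef := by
  obtain ⟨k, Y, Z, hY, hZ, rfl⟩ := hX
  have hpt : ptSnd (∑ i, Y i ⊗ₖ Z i) = ∑ i, Y i ⊗ₖ (Z i)ᵀ := by
    funext q r
    simp [ptSnd, Matrix.sum_apply, Matrix.kroneckerMap_apply, Matrix.transpose_apply]
  rw [hpt]
  refine Finset.sum_induction _ _ (fun a b ha hb => psd_add ha hb) Matrix.PosSemidef.zero ?_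
  exact fun i _ => psd_kron (hY i) ((hZ i).transpose)
end
end

section
/- If Φ : M_{d_A} → M_{d_B} is completely positive with Choi matrix J(Φ) positive semidefinite of rank 1, and J(Φ) has positive partial transpose, then J(Φ) is separable (equals a product state up to the rank condition), i.e., Φ is entanglement breaking. -/
open Matrix Kronecker BigOperators ComplexOrder

noncomputable section

local notation "cj" => starRingEnd ℂ

lemma aux_det_nonneg {n : Type*} [Fintype n] [DecidableEq n] {X : Matrix n n ℂ}
    (h : X.PosSemidef) : 0 ≤ X.det := by
  exact h.det_nonneg

lemma aux_det2 {n : Type*} [Fintype n] [DecidableEq n] {X : Matrix n n ℂ}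
    (h : X.PosSemidef) (i j : n) :
    0 ≤ X i i * X j j - X i j * X j i := by
  have h2 := aux_det_nonneg (h.submatrix ![i, j])
  rw [Matrix.det_fin_two] at h2
  simpa using h2

lemma aux_det3 {n : Type*} [Fintype n] [DecidableEq n] {X : Matrix n n ℂ}
    (h : X.PosSemidef) (i j k : n) :
    0 ≤ X i i * X j j * X k k - X i i * X j k * X k j - X i j * X j i * X k k
        + X i j * X j k * X k i + X i k * X j i * X k j - X i k * X j j * X k i := by
  have h3 := aux_det_nonneg (h.submatrix ![i, j, k])
  rw [Matrix.det_fin_three] at h3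
  simpa using h3

lemma aux_outer_psd {n : Type*} [Fintype n] (v : n → ℂ) :
    Matrix.PosSemidef (Matrix.of fun i j => v i * (starRingEnd ℂ) (v j)) := by
  have h := Matrix.posSemidef_conjTranspose_mul_self
    (Matrix.of fun (_ : Fin 1) i => (starRingEnd ℂ) (v i))
  have e : (Matrix.of fun i j => v i * (starRingEnd ℂ) (v j)) =
      (Matrix.of fun (_ : Fin 1) i => (starRingEnd ℂ) (v i))ᴴ *
      (Matrix.of fun (_ : Fin 1) i => (starRingEnd ℂ) (v i)) := by
    ext i j
    simp [Matrix.mul_apply, Fin.sum_univ_one, mul_comm]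
  rw [e]; exact h

lemma aux_smul_psd {n : Type*} [Fintype n] {M : Matrix n n ℂ} (h : M.PosSemidef)
    {c : ℝ} (hc : 0 ≤ c) : ((c : ℂ) • M).PosSemidef := by
  refine Matrix.PosSemidef.of_dotProduct_mulVec_nonneg ?_ (fun x => ?_)
  · have := h.1
    unfold Matrix.IsHermitian at *
    rw [Matrix.conjTranspose_smul, this]
    rw [Complex.star_def, Complex.conj_ofReal]
  · rw [Matrix.smul_mulVec, dotProduct_smul, smul_eq_mul]
    exact mul_nonneg (by exact_mod_cast hc) (h.dotProduct_mulVec_nonneg x)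

lemma aux_diag_nonneg {n : Type*} [Fintype n] [DecidableEq n] {X : Matrix n n ℂ}
    (h : X.PosSemidef) (i : n) : 0 ≤ X i i := by
  have := h.dotProduct_mulVec_nonneg (Pi.single i 1)
  simpa [dotProduct, Matrix.mulVec, Pi.single_apply, Finset.sum_ite_eq] using this


lemma pos_real_mul_nonneg {r : ℝ} (hr : 0 < r) {z : ℂ} (h : 0 ≤ (r : ℂ) * z) : 0 ≤ z := by
  rw [Complex.le_def] at h ⊢
  simp only [Complex.mul_re, Complex.mul_im, Complex.ofReal_re, Complex.ofReal_im,
    Complex.zero_re, Complex.zero_im, zero_mul, sub_zero, zero_add] at h ⊢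
  constructor
  · nlinarith [h.1]
  · nlinarith [h.2]

lemma quad_core (α β γ δ : ℂ) (hα : α ≠ 0)
    (E1 : 0 ≤ α * cj α * (δ * cj δ) - β * cj β * (γ * cj γ))
    (E2 : 0 ≤ β * cj β * (γ * cj γ) - α * cj α * (δ * cj δ))
    (E3 : 0 ≤ (Complex.normSq α : ℂ) *
      ((cj α * β * γ * cj δ) + (α * cj β * cj γ * δ)
        - (Complex.normSq α : ℂ) * (Complex.normSq δ : ℂ)
        - (Complex.normSq β : ℂ) * (Complex.normSq γ : ℂ))) :
    δ * α = γ * β := by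
  set w : ℂ := cj α * β * γ * cj δ with hw
  have hnz : ∀ z : ℂ, z * cj z = (Complex.normSq z : ℂ) := fun z => Complex.mul_conj z
  have hnα0 : 0 < Complex.normSq α := Complex.normSq_pos.mpr hα
  have heqC : β * cj β * (γ * cj γ) = α * cj α * (δ * cj δ) :=
    le_antisymm (sub_nonneg.mp E1) (sub_nonneg.mp E2)
  have heqR : Complex.normSq β * Complex.normSq γ = Complex.normSq α * Complex.normSq δ := by
    have h := heqC
    rw [hnz α, hnz β, hnz γ, hnz δ] at h
    exact_mod_cast h
  have hcjw : cj w = α * cj β * cj γ * δ := by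
    rw [hw]
    simp only [_root_.map_mul, Complex.conj_conj]
  have hnsC : (Complex.normSq β : ℂ) * (Complex.normSq γ : ℂ)
      = (Complex.normSq α : ℂ) * (Complex.normSq δ : ℂ) := by
    have h := heqC
    rw [hnz α, hnz β, hnz γ, hnz δ] at h
    linear_combination h
  have h3 : 0 ≤ w + cj w - 2 * ((Complex.normSq α : ℂ) * (Complex.normSq δ : ℂ)) := by
    rw [hcjw]
    refine pos_real_mul_nonneg hnα0 (le_of_le_of_eq E3 ?_)
    rw [hnsC]
    ring
  have h4 : w + cj w - 2 * ((Complex.normSq α : ℂ) * (Complex.normSq δ : ℂ)) =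
      ((2 * w.re - 2 * (Complex.normSq α * Complex.normSq δ) : ℝ) : ℂ) := by
    rw [Complex.add_conj]
    push_cast
    ring
  rw [h4] at h3
  have hre : Complex.normSq α * Complex.normSq δ ≤ w.re := by
    have := Complex.zero_le_real.mp h3
    linarith
  have habs : ‖w‖ = Complex.normSq α * Complex.normSq δ := by
    have h1 : ‖w‖ =
        ‖α‖ * ‖β‖ * ‖γ‖ * ‖δ‖ := by
      rw [hw]
      rw [norm_mul, norm_mul, norm_mul, Complex.norm_conj, Complex.norm_conj]
    have h2 : (‖w‖) ^ 2 = (Complex.normSq α * Complex.normSq δ) ^ 2 := by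
      rw [h1]
      have h := heqR
      simp only [← Complex.sq_norm] at h ⊢
      linear_combination (‖α‖ ^ 2 * ‖δ‖ ^ 2) * h
    have h4' : 0 ≤ ‖w‖ := norm_nonneg _
    have h5 : 0 ≤ Complex.normSq α * Complex.normSq δ :=
      mul_nonneg (Complex.normSq_nonneg _) (Complex.normSq_nonneg _)
    have h6 : (‖w‖ - Complex.normSq α * Complex.normSq δ) *
        (‖w‖ + Complex.normSq α * Complex.normSq δ) = 0 := by
      linear_combination h2
    rcases mul_eq_zero.mp h6 with h | h
    · linarith
    · linarith
  have hre2 : w.re = ‖w‖ := le_antisymm (Complex.re_le_norm w) (by rw [habs]; exact hre)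
  have him : w.im = 0 := by
    have hsq := Complex.sq_norm w
    rw [Complex.normSq_apply, ← hre2] at hsq
    have h7 : w.im * w.im = 0 := by linear_combination -hsq
    exact mul_self_eq_zero.mp h7
  have hwre : w = ((Complex.normSq α * Complex.normSq δ : ℝ) : ℂ) := by
    rw [← habs, ← hre2]
    exact Complex.ext rfl him
  have hkey : cj α * β * γ * cj δ = α * cj α * (δ * cj δ) := by
    rw [← hw, hwre, hnz α, hnz δ]
    push_cast
    ring
  have hcα : cj α ≠ 0 := by simpa using hα
  by_cases hδ : δ = 0
  · have h0 : Complex.normSq β * Complex.normSq γ = 0 := by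
      rw [heqR, hδ]; simp
    rcases mul_eq_zero.mp h0 with h | h
    · rw [Complex.normSq_eq_zero.mp h, hδ]; ring
    · rw [Complex.normSq_eq_zero.mp h, hδ]; ring
  · have hcδ : cj δ ≠ 0 := by simpa using hδ
    have h8 : (β * γ) * (cj α * cj δ) = (α * δ) * (cj α * cj δ) := by
      linear_combination hkey
    have h9 : β * γ = α * δ := mul_right_cancel₀ (mul_ne_zero hcα hcδ) h8
    linear_combination -h9

theorem sep_of_rank_one {m p : Type*} [Fintype m] [DecidableEq m] [Fintype p] [DecidableEq p]
    (X : Matrix (m × p) (m × p) ℂ) (hpsd : X.PosSemidef) (hrank : X.rank = 1)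
    (hPPT : (ptSnd X).PosSemidef) : Separable X := by
  classical
  have herm : ∀ q r, (starRingEnd ℂ) (X q r) = X r q := fun q r => hpsd.1.apply r q
  -- rank one: columns proportional
  have hrank' : Module.finrank ℂ (LinearMap.range X.mulVecLin) = 1 := hrank
  obtain ⟨v0, hv0ne, hv0span⟩ := finrank_eq_one_iff'.mp hrank'
  have hcol : ∀ r, ∃ c : ℂ, ∀ q, X q r = c * (v0 : (m × p) → ℂ) q := by
    intro r
    obtain ⟨c, hc⟩ := hv0span ⟨X.mulVec (Pi.single r 1), ⟨Pi.single r 1, rfl⟩⟩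
    refine ⟨c, fun q => ?_⟩
    have h1 := congrArg Subtype.val hc
    have h2 := congrFun h1 q
    simpa [Matrix.mulVec_single] using h2.symm
  choose c hc using hcol
  have minor : ∀ q r q' r', X q r * X q' r' = X q r' * X q' r := by
    intro q r q' r'
    simp only [hc]
    ring
  -- nonzero diagonal entry
  have hdiag : ∃ r0, X r0 r0 ≠ 0 := by
    by_contra hcon
    push_neg at hcon
    have hX0 : X = 0 := by
      ext q r
      have h2 := aux_det2 hpsd q r
      rw [hcon q, hcon r, ← herm q r, Complex.mul_conj] at h2
      have h3 : (0:ℂ) ≤ -(Complex.normSq (X q r) : ℂ) := by simpa using h2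
      rw [← Complex.ofReal_neg] at h3
      have h4 : (0:ℝ) ≤ -Complex.normSq (X q r) := Complex.zero_le_real.mp h3
      have h5 : Complex.normSq (X q r) = 0 :=
        le_antisymm (by linarith) (Complex.normSq_nonneg _)
      simpa using Complex.normSq_eq_zero.mp h5
    rw [hX0, Matrix.rank_zero] at hrank
    exact one_ne_zero hrank.symm
  obtain ⟨⟨a0, b0⟩, hr0⟩ := hdiag
  set t : ℂ := X (a0, b0) (a0, b0) with ht
  have htc : (starRingEnd ℂ) t = t := herm _ _
  have htnn : 0 ≤ t := aux_diag_nonneg hpsd _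
  have htre : t = (t.re : ℂ) := by
    have := Complex.le_def.mp htnn
    exact Complex.ext rfl this.2.symm
  have htre_pos : 0 < t.re := by
    rcases lt_or_eq_of_le (Complex.le_def.mp htnn).1 with h | h
    · simpa using h
    · exfalso; apply hr0; rw [htre, ← h]; simp
  set v : m × p → ℂ := fun q => X q (a0, b0) with hvdef
  have key : ∀ q r, v q * (starRingEnd ℂ) (v r) = X q r * t := by
    intro q r
    have h1 : (starRingEnd ℂ) (v r) = X (a0, b0) r := herm r (a0, b0)
    rw [h1]
    exact minor q (a0, b0) (a0, b0) r
  have hvr0 : v (a0, b0) = t := rfl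
  -- PSD of the "outer-product" version of the partial transpose
  have hYpsd : Matrix.PosSemidef (Matrix.of fun q r : m × p =>
      v (q.1, r.2) * (starRingEnd ℂ) (v (r.1, q.2))) := by
    have e : (Matrix.of fun q r : m × p =>
        v (q.1, r.2) * (starRingEnd ℂ) (v (r.1, q.2))) = (t.re : ℂ) • ptSnd X := by
      ext q r
      simp only [Matrix.of_apply, Matrix.smul_apply, smul_eq_mul]
      rw [key, ← htre]
      simp [ptSnd, mul_comm]
    rw [e]
    exact aux_smul_psd hPPT (le_of_lt htre_pos)
  -- main claim
  have claim : ∀ a b, v (a, b) * v (a0, b0) = v (a, b0) * v (a0, b) := by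
    intro a b
    by_cases ha : a = a0
    · subst ha; ring
    by_cases hb : b = b0
    · subst hb; ring
    have hα : v (a0, b0) ≠ 0 := hr0
    have E1 : 0 ≤ v (a0, b0) * cj (v (a0, b0)) * (v (a, b) * cj (v (a, b)))
        - v (a0, b) * cj (v (a0, b)) * (v (a, b0) * cj (v (a, b0))) := by
      have e1 := aux_det2 hYpsd (a0, b0) (a, b)
      simp only [Matrix.of_apply] at e1
      refine le_of_le_of_eq e1 ?_
      ring
    have E2 : 0 ≤ v (a0, b) * cj (v (a0, b)) * (v (a, b0) * cj (v (a, b0)))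
        - v (a0, b0) * cj (v (a0, b0)) * (v (a, b) * cj (v (a, b))) := by
      have e2 := aux_det2 hYpsd (a0, b) (a, b0)
      simp only [Matrix.of_apply] at e2
      refine le_of_le_of_eq e2 ?_
      ring
    have E3 : 0 ≤ (Complex.normSq (v (a0, b0)) : ℂ) *
        ((cj (v (a0, b0)) * v (a0, b) * v (a, b0) * cj (v (a, b)))
          + (v (a0, b0) * cj (v (a0, b)) * cj (v (a, b0)) * v (a, b))
          - (Complex.normSq (v (a0, b0)) : ℂ) * (Complex.normSq (v (a, b)) : ℂ)
          - (Complex.normSq (v (a0, b)) : ℂ) * (Complex.normSq (v (a, b0)) : ℂ)) := by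
      have e3 := aux_det3 hYpsd (a0, b0) (a0, b) (a, b0)
      simp only [Matrix.of_apply] at e3
      refine le_of_le_of_eq e3 ?_
      simp only [← Complex.mul_conj]
      ring
    exact quad_core (v (a0, b0)) (v (a0, b)) (v (a, b0)) (v (a, b)) hα E1 E2 E3
  -- construct the separable decomposition
  have hspos0 : (0:ℝ) < t.re ^ 3 := by positivity
  set s : ℝ := Real.sqrt (t.re ^ 3) with hs
  have hspos : 0 < s := Real.sqrt_pos.mpr hspos0
  have hsc : (s : ℂ) ≠ 0 := by exact_mod_cast ne_of_gt hspos
  have hs2 : (s : ℂ) * s = t * t * t := by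
    have hss : s * s = t.re ^ 3 := Real.mul_self_sqrt (le_of_lt hspos0)
    calc ((s : ℝ) : ℂ) * s = ((t.re ^ 3 : ℝ) : ℂ) := by rw [← Complex.ofReal_mul, hss]
      _ = ((t.re : ℝ) : ℂ) ^ 3 := by push_cast; ring
      _ = t * t * t := by rw [← htre]; ring
  refine ⟨1, fun _ => Matrix.of (fun a a' => v (a, b0) * cj (v (a', b0))),
      fun _ => Matrix.of (fun b b' => (v (a0, b) / s) * cj (v (a0, b') / s)),
      fun _ => aux_outer_psd (fun a => v (a, b0)),
      fun _ => aux_outer_psd (fun b => v (a0, b) / s), ?_⟩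
  rw [Fin.sum_univ_one]
  ext ⟨a, b⟩ ⟨a', b'⟩
  rw [Matrix.kroneckerMap_apply]
  simp only [Matrix.of_apply]
  have h1 : v (a, b) * t = v (a, b0) * v (a0, b) := claim a b
  have hvt : v (a0, b0) = t := rfl
  have h2 : cj (v (a', b')) * t = cj (v (a', b0)) * cj (v (a0, b')) := by
    have hcc := congrArg cj (claim a' b')
    simp only [_root_.map_mul, hvt, htc] at hcc
    exact hcc
  have h3 : X (a, b) (a', b') * t = v (a, b) * cj (v (a', b')) := (key _ _).symm
  have hm : X (a, b) (a', b') * (t * t * t)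
      = (v (a, b0) * cj (v (a', b0))) * (v (a0, b) * cj (v (a0, b'))) := by
    calc X (a, b) (a', b') * (t * t * t)
        = (X (a, b) (a', b') * t) * t * t := by ring
      _ = (v (a, b) * t) * (cj (v (a', b')) * t) := by rw [h3]; ring
      _ = (v (a, b0) * v (a0, b)) * (cj (v (a', b0)) * cj (v (a0, b'))) := by rw [h1, h2]
      _ = _ := by ring
  rw [map_div₀, Complex.conj_ofReal, div_mul_div_comm, ← mul_div_assoc,
    eq_div_iff (mul_ne_zero hsc hsc), hs2]
  linear_combination hm

theorem stmt17 {dA dB : ℕ} (Φ : Matrix (Fin dA) (Fin dA) ℂ →ₗ[ℂ] Matrix (Fin dB) (Fin dB) ℂ)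
    (hCP : IsCP Φ) (hpsd : (Choi Φ).PosSemidef) (hrank : (Choi Φ).rank = 1)
    (hPPT : (ptSnd (Choi Φ)).PosSemidef) :
    Separable (Choi Φ) :=
  sep_of_rank_one (Choi Φ) hpsd hrank hPPT
end
end

section
/- If Ψ : M_{d_A} → M_{d_C} is completely positive with Kraus operators all of rank one, then Ψ is entanglement breaking. -/
open Matrix Kronecker BigOperators ComplexOrder

noncomputable section

/-- A matrix of rank at most one factors as an outer product. -/
lemma rank_le_one_factor {m n : ℕ} (M : Matrix (Fin m) (Fin n) ℂ) (h : M.rank ≤ 1) :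
    ∃ (v : Fin m → ℂ) (w : Fin n → ℂ), ∀ c a, M c a = v c * w a := by
  rw [Matrix.rank] at h
  obtain ⟨v, hv⟩ := finrank_le_one_iff.mp h
  choose f hf using hv
  refine ⟨fun c => (v : Fin m → ℂ) c,
    fun a => f ⟨M.mulVec (Pi.single a 1), LinearMap.mem_range.mpr ⟨Pi.single a 1, rfl⟩⟩,
    fun c a => ?_⟩
  set x : LinearMap.range M.mulVecLin :=
    ⟨M.mulVec (Pi.single a 1), LinearMap.mem_range.mpr ⟨Pi.single a 1, rfl⟩⟩ with hx
  have h3 := congrFun (congrArg Subtype.val (hf x)) c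
  change f x * (v : Fin m → ℂ) c = (x : Fin m → ℂ) c at h3
  have h4 : (x : Fin m → ℂ) c = M c a := by
    show M.mulVec (Pi.single a 1) c = M c a
    simp [Matrix.mulVec_single]
  show M c a = (v : Fin m → ℂ) c * f x
  rw [mul_comm]
  exact (h3.trans h4).symm

theorem stmt18 {dA dC K : ℕ}
    (Ψ : Matrix (Fin dA) (Fin dA) ℂ →ₗ[ℂ] Matrix (Fin dC) (Fin dC) ℂ)
    (A : Fin K → Matrix (Fin dC) (Fin dA) ℂ)
    (hKraus : ∀ X, Ψ X = ∑ k, A k * X * (A k)ᴴ)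
    (hrk : ∀ k, (A k).rank ≤ 1) :
    IsEB Ψ := by
  intro n X hX
  choose v w hvw using fun k => rank_le_one_factor (A k) (hrk k)
  refine ⟨K, fun k => fun i j => ∑ a, ∑ a', w k a * X (i, a) (j, a') * star (w k a'),
    fun k => fun c c' => v k c * star (v k c'), ?_, ?_, ?_⟩
  · intro k
    set B : Matrix (Fin n) (Fin n × Fin dA) ℂ :=
      fun i p => if i = p.1 then w k p.2 else 0 with hBdef
    have hB := hX.mul_mul_conjTranspose_same B
    have hEq : B * X * Bᴴ
        = fun i j => ∑ a, ∑ a', w k a * X (i, a) (j, a') * star (w k a') := by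
      ext i j
      simp only [Matrix.mul_apply, Matrix.conjTranspose_apply, Fintype.sum_prod_type]
      rw [Finset.sum_eq_single j (fun b _ hb => by simp [hBdef, Ne.symm hb]) (by simp)]
      conv_rhs => rw [Finset.sum_comm]
      refine Finset.sum_congr rfl fun a' _ => ?_
      rw [Finset.sum_eq_single i (fun b _ hb => by simp [hBdef, Ne.symm hb]) (by simp)]
      simp [hBdef, Finset.sum_mul]
    rw [hEq] at hB
    exact hB
  · intro k
    set C : Matrix (Fin dC) (Fin 1) ℂ := fun c _ => v k c with hCdef
    have := Matrix.posSemidef_self_mul_conjTranspose C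
    have hEq : C * Cᴴ
        = fun c c' => v k c * star (v k c') := by
      ext c c'
      simp [Matrix.mul_apply, Matrix.conjTranspose_apply]
      rfl
    rw [hEq] at this
    exact this
  · ext ⟨i, c⟩ ⟨j, c'⟩
    simp only [amp, hKraus, Matrix.sum_apply, Matrix.kroneckerMap_apply, Matrix.mul_apply,
      Matrix.conjTranspose_apply, star_mul', hvw]
    refine (congrFun (congrFun (hKraus _) c) c').trans ?_
    simp only [Matrix.sum_apply, Matrix.kroneckerMap_apply, Matrix.mul_apply,
      Matrix.conjTranspose_apply, star_mul', hvw]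
    refine Finset.sum_congr rfl fun k _ => ?_
    change ∑ x, (∑ y, A k c y * X (i, y) (j, x)) * (star (v k c') * star (w k x)) =
      (∑ a, ∑ a', w k a * X (i, a) (j, a') * star (w k a')) * (v k c * star (v k c'))
    simp only [Finset.sum_mul, Finset.mul_sum, hvw, star_mul']
    rw [Finset.sum_comm]
    refine Finset.sum_congr rfl fun a' _ => Finset.sum_congr rfl fun a _ => ?_
    ring
end
end
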